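/- Let γ > 1, K > 0, T ∈ (0,∞], and let c, b : [0,T) → ℝ be differentiable functions. Suppose ρ : ℝ × [0,T) → (0,∞) is such that for each t the function x ↦ ρ(x,t)^{γ−1} is differentiable, and the pair (ρ, u) with u(x,t) = c(t) x + b(t) satisfies the momentum equation u_t + u u_x + (Kγ/(γ−1)) ∂_x(ρ^{γ−1}) = 0 at every (x,t) ∈ ℝ × [0,T). Then for all x ∈ ℝ and t ∈ [0,T): ρ^{γ−1}(x,t) = ρ^{γ−1}(0,t) − ((γ−1)/(Kγ))[b'(t) + b(t)c(t)] x − ((γ−1)/(2Kγ))[c'(t) + c(t)²] x². -/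

import Mathlib

open Real Set Filter Topology
open scoped ENNReal

/-- If a positive density `ρ` together with the linear velocity
`u(x,t) = c(t)x + b(t)` satisfies the momentum equation
`u_t + u u_x + (Kγ/(γ-1)) ∂_x(ρ^{γ-1}) = 0`, then `ρ^{γ-1}` is the explicit
quadratic profile in `x` obtained by integrating from `0` to `x`. -/
theorem density_profile_of_momentum
    (γ K : ℝ) (hγ : 1 < γ) (hK : 0 < K)
    (T : ℝ≥0∞) (hT : 0 < T)
    (D : Set ℝ) (hD : D = {t : ℝ | 0 ≤ t ∧ ENNReal.ofReal t < T})
    (c c' b b' : ℝ → ℝ)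
    (hc : ∀ t ∈ D, HasDerivAt c (c' t) t)
    (hb : ∀ t ∈ D, HasDerivAt b (b' t) t)
    (ρ : ℝ → ℝ → ℝ)
    (hρpos : ∀ x : ℝ, ∀ t ∈ D, 0 < ρ x t)
    (hρdiff : ∀ t ∈ D, ∀ x : ℝ, DifferentiableAt ℝ (fun y => ρ y t ^ (γ - 1)) x)
    (u : ℝ → ℝ → ℝ)
    (hu : u = fun x t => c t * x + b t)
    (hmom : ∀ x : ℝ, ∀ t ∈ D,
      deriv (fun τ => u x τ) t + u x t * deriv (fun y => u y t) x
        + (K * γ / (γ - 1)) * deriv (fun y => ρ y t ^ (γ - 1)) x = 0) :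
    ∀ x : ℝ, ∀ t ∈ D,
      ρ x t ^ (γ - 1) = ρ 0 t ^ (γ - 1)
        - ((γ - 1) / (K * γ)) * (b' t + b t * c t) * x
        - ((γ - 1) / (2 * K * γ)) * (c' t + c t ^ 2) * x ^ 2 := by
  intro x t ht
  have hγ0 : γ - 1 ≠ 0 := by linarith
  have hK0 : K ≠ 0 := ne_of_gt hK
  have hγne : γ ≠ 0 := by positivity
  set f : ℝ → ℝ := fun y => ρ y t ^ (γ - 1) with hf
  -- compute the spatial derivative of f at any point y
  have hderiv : ∀ y : ℝ, deriv f y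
      = -((γ - 1) / (K * γ)) * ((c' t + c t ^ 2) * y + (b' t + b t * c t)) := by
    intro y
    have hm := hmom y t ht
    have h1 : deriv (fun τ => u y τ) t = c' t * y + b' t := by
      have : HasDerivAt (fun τ => c τ * y + b τ) (c' t * y + b' t) t :=
        ((hc t ht).mul_const y).add (hb t ht)
      simpa [hu] using this.deriv
    have h2 : deriv (fun z => u z t) y = c t := by
      have : HasDerivAt (fun z => c t * z + b t) (c t * 1) y :=
        ((hasDerivAt_id y).const_mul (c t)).add_const (b t)
      simpa [hu] using this.deriv
    rw [hu] at hm
    simp only at hm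
    rw [show (fun τ => c τ * y + b τ) = (fun τ => u y τ) from by rw [hu],
      show (fun z => c t * z + b t) = (fun z => u z t) from by rw [hu]] at hm
    rw [h1, h2] at hm
    have hKγ : K * γ ≠ 0 := mul_ne_zero hK0 hγne
    rw [show (fun y => ρ y t ^ (γ - 1)) = f from rfl] at hm
    have := hm
    field_simp at this ⊢
    linear_combination this
  -- the quadratic corrected function is constant
  set P : ℝ := (γ - 1) / (K * γ) * (b' t + b t * c t) with hP
  set Q : ℝ := (γ - 1) / (2 * K * γ) * (c' t + c t ^ 2) with hQ
  set g : ℝ → ℝ := fun y => f y + P * y + Q * y ^ 2 with hg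
  have hgdiff : Differentiable ℝ g := by
    intro y
    exact ((hρdiff t ht y).add ((differentiable_id.const_mul P) y)).add
      (((differentiable_id.pow 2).const_mul Q) y)
  have hgderiv : ∀ y : ℝ, deriv g y = 0 := by
    intro y
    have hfd : HasDerivAt f (deriv f y) y := (hρdiff t ht y).hasDerivAt
    have h2 : HasDerivAt (fun z : ℝ => P * z) (P * 1) y :=
      (hasDerivAt_id y).const_mul P
    have h3 : HasDerivAt (fun z : ℝ => Q * z ^ 2) (Q * (2 * y ^ 1)) y := by
      simpa using ((hasDerivAt_pow 2 y).const_mul Q)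
    have := (hfd.add h2).add h3
    rw [show g = ((f + fun z => P * z) + fun z => Q * z ^ 2) from rfl, this.deriv, hderiv y, hP, hQ]
    field_simp
    ring
  have hconst : g x = g 0 := is_const_of_deriv_eq_zero hgdiff hgderiv x 0
  have : f x + P * x + Q * x ^ 2 = f 0 := by simpa [hg] using hconst
  have hfx : f x = f 0 - P * x - Q * x ^ 2 := by linarith
  simpa [hf, hP, hQ] using hfx
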